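/- arXiv:2211.10054 — 2 statements merged into one kernel-verified Lean document; each statement's English description precedes it below -/
import Mathlib

section
/- In the IRM-example generating model, for any pair of indices (i,j), the Pearson correlation between the i-th coordinate of x₁ and the j-th coordinate of x₂ equals σ · Γ_{ij} / √((a_j² + b_j²)·σ² + 1), where Γ = (W_{xy} W_{yx})ᵀ, a_j² is the squared Euclidean norm of the j-th row of W_{xy} W_{yx}, and b_j² is the squared Euclidean norm of the j-th row of W_{xy}. -/
open MeasureTheory ProbabilityTheory Matrix

/-- Covariance of two real random variables: `Cov(U,V) = E[UV] − E[U]·E[V]`. -/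
noncomputable def cov {Ω : Type*} [MeasurableSpace Ω] (μ : Measure Ω) (U V : Ω → ℝ) : ℝ :=
  (∫ ω, U ω * V ω ∂μ) - (∫ ω, U ω ∂μ) * (∫ ω, V ω ∂μ)

/-- Variance of a real random variable: `Var(U) = Cov(U,U)`. -/
noncomputable def var {Ω : Type*} [MeasurableSpace Ω] (μ : Measure Ω) (U : Ω → ℝ) : ℝ :=
  cov μ U U

/-- Pearson correlation: `Corr(U,V) = Cov(U,V) / √(Var(U)·Var(V))`. -/
noncomputable def corr {Ω : Type*} [MeasurableSpace Ω] (μ : Measure Ω) (U V : Ω → ℝ) : ℝ :=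
  cov μ U V / Real.sqrt (var μ U * var μ V)

/-- In the IRM-example generating model, the Pearson correlation between `(x₁)_i` and `(x₂)_j`
equals `σ · Γ_{ij} / √((a_j² + b_j²)·σ² + 1)` where `Γ = (W_xy · W_yx)ᵀ`, `a_j²` is the squared
Euclidean norm of the `j`-th row of `W_xy · W_yx`, and `b_j²` is the squared Euclidean norm of the
`j`-th row of `W_xy`. -/
theorem correlation_x1_x2 {Ω : Type*} [MeasurableSpace Ω] (μ : Measure Ω)
    [IsProbabilityMeasure μ] {d : ℕ}
    (Z : Fin 3 → Ω → (Fin d → ℝ))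
    (hmeas : ∀ k, Measurable (Z k))
    (hindep : iIndepFun Z μ)
    (hL2 : ∀ k i, MemLp (fun ω => Z k ω i) 2 μ)
    (hmean : ∀ k i, (∫ ω, Z k ω i ∂μ) = 0)
    (hunit : ∀ k i j, (∫ ω, Z k ω i * Z k ω j ∂μ) = if i = j then 1 else 0)
    (Wyx Wxy : Matrix (Fin d) (Fin d) ℝ) (σ : ℝ) (hσ : 0 < σ)
    (x₁ ytilde x₂ : Ω → Fin d → ℝ)
    (hx₁ : ∀ ω, x₁ ω = σ • Z 0 ω)
    (hy : ∀ ω, ytilde ω = Wyx.mulVec (x₁ ω) + σ • Z 1 ω)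
    (hx₂ : ∀ ω, x₂ ω = Wxy.mulVec (ytilde ω) + Z 2 ω)
    (i j : Fin d) :
    corr μ (fun ω => x₁ ω i) (fun ω => x₂ ω j) =
      σ * ((Wxy * Wyx)ᵀ) i j /
        Real.sqrt (((∑ k, ((Wxy * Wyx) j k) ^ 2) + ∑ k, (Wxy j k) ^ 2) * σ ^ 2 + 1) := by
  set A : Matrix (Fin d) (Fin d) ℝ := Wxy * Wyx with hAdef
  -- basic integrability facts
  have hZint : ∀ k a, Integrable (fun ω => Z k ω a) μ := fun k a =>
    (hL2 k a).integrable one_le_two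
  have hmul_int : ∀ k a l b, Integrable (fun ω => Z k ω a * Z l ω b) μ := by
    intro k a l b
    have h := memLp_one_iff_integrable.mp <| (hL2 l b).smul (hL2 k a)
      (hpqr := ⟨by simp [ENNReal.inv_two_add_inv_two]⟩)
    have e : ((fun ω => Z k ω a) • fun ω => Z l ω b) = fun ω => Z k ω a * Z l ω b := by
      funext ω; simp [Pi.smul_apply', smul_eq_mul]
    rwa [e] at h
  -- second moments
  have hE : ∀ k l (a b : Fin d), (∫ ω, Z k ω a * Z l ω b ∂μ)
      = if k = l then (if a = b then 1 else 0) else 0 := by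
    intro k l a b
    by_cases hkl : k = l
    · subst hkl; rw [if_pos rfl]; exact hunit k a b
    · rw [if_neg hkl]
      have h := (hindep.indepFun hkl).comp (measurable_pi_apply a) (measurable_pi_apply b)
      have h2 := h.integral_mul_eq_mul_integral (((measurable_pi_apply a).comp (hmeas k)).aestronglyMeasurable)
        (((measurable_pi_apply b).comp (hmeas l)).aestronglyMeasurable)
      simp only [Function.comp_def, Pi.mul_apply] at h2
      rw [h2, hmean, zero_mul]
  -- coordinates of x₂ as explicit linear combination
  have hgrep : ∀ ω, x₂ ω j =
      (∑ k, σ * A j k * Z 0 ω k) + ((∑ k, σ * Wxy j k * Z 1 ω k) + Z 2 ω j) := by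
    intro ω
    have : x₂ ω = σ • ((A).mulVec (Z 0 ω)) + (σ • (Wxy.mulVec (Z 1 ω)) + Z 2 ω) := by
      rw [hx₂, hy, hx₁, hAdef]
      simp [Matrix.mulVec_add, Matrix.mulVec_smul, Matrix.mulVec_mulVec, add_assoc]
    rw [this]
    simp only [Pi.add_apply, Pi.smul_apply, smul_eq_mul, Matrix.mulVec, dotProduct,
      Finset.mul_sum]
    simp [mul_assoc]
  -- integrability of Z m a * x₂ j and value of the integral
  have tri : ∀ (f g h : Ω → ℝ), Integrable f μ → Integrable g μ → Integrable h μ →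
      (∫ ω, f ω + (g ω + h ω) ∂μ) = (∫ ω, f ω ∂μ) + ((∫ ω, g ω ∂μ) + (∫ ω, h ω ∂μ)) := by
    intro f g h hf hg hh
    rw [integral_add hf (show Integrable (fun ω => g ω + h ω) μ from hg.add hh),
      integral_add hg hh]
  have hsum_int : ∀ (m : Fin 3) (a : Fin d) (l : Fin 3) (c : Fin d → ℝ),
      Integrable (fun ω => ∑ k, c k * (Z m ω a * Z l ω k)) μ := by
    intro m a l c
    exact integrable_finset_sum _ fun k _ => (hmul_int m a l k).const_mul (c k)
  have hsum_eq : ∀ (m : Fin 3) (a : Fin d) (l : Fin 3) (c : Fin d → ℝ),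
      (∫ ω, ∑ k, c k * (Z m ω a * Z l ω k) ∂μ)
        = ∑ k, c k * (∫ ω, Z m ω a * Z l ω k ∂μ) := by
    intro m a l c
    rw [integral_finset_sum _ fun k _ => (hmul_int m a l k).const_mul (c k)]
    simp_rw [integral_const_mul]
  have hprod_rep : ∀ (m : Fin 3) (a : Fin d) ω, Z m ω a * x₂ ω j =
      (∑ k, (σ * A j k) * (Z m ω a * Z 0 ω k))
        + ((∑ k, (σ * Wxy j k) * (Z m ω a * Z 1 ω k)) + Z m ω a * Z 2 ω j) := by
    intro m a ω
    rw [hgrep ω, mul_add, mul_add, Finset.mul_sum, Finset.mul_sum]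
    congr 1
    · exact Finset.sum_congr rfl fun k _ => by ring
    congr 1
    exact Finset.sum_congr rfl fun k _ => by ring
  have hJint : ∀ (m : Fin 3) (a : Fin d), Integrable (fun ω => Z m ω a * x₂ ω j) μ := by
    intro m a
    have : (fun ω => Z m ω a * x₂ ω j) = fun ω =>
        (∑ k, (σ * A j k) * (Z m ω a * Z 0 ω k))
          + ((∑ k, (σ * Wxy j k) * (Z m ω a * Z 1 ω k)) + Z m ω a * Z 2 ω j) := by
      funext ω; exact hprod_rep m a ω
    rw [this]
    exact (hsum_int m a 0 _).add ((hsum_int m a 1 _).add (hmul_int m a 2 j))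
  have hJ : ∀ (m : Fin 3) (a : Fin d), (∫ ω, Z m ω a * x₂ ω j ∂μ)
      = (∑ k, (σ * A j k) * (∫ ω, Z m ω a * Z 0 ω k ∂μ))
        + ((∑ k, (σ * Wxy j k) * (∫ ω, Z m ω a * Z 1 ω k ∂μ))
          + (∫ ω, Z m ω a * Z 2 ω j ∂μ)) := by
    intro m a
    simp_rw [hprod_rep m a]
    rw [tri (fun ω => ∑ k, (σ * A j k) * (Z m ω a * Z 0 ω k))
      (fun ω => ∑ k, (σ * Wxy j k) * (Z m ω a * Z 1 ω k)) (fun ω => Z m ω a * Z 2 ω j)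
      (hsum_int m a 0 _) (hsum_int m a 1 _) (hmul_int m a 2 j), hsum_eq, hsum_eq]
  -- the three needed values
  have hJ0 : ∀ a, (∫ ω, Z 0 ω a * x₂ ω j ∂μ) = σ * A j a := by
    intro a
    rw [hJ 0 a]
    simp [hE, Finset.sum_ite_eq, eq_comm]
  have hJ1 : ∀ a, (∫ ω, Z 1 ω a * x₂ ω j ∂μ) = σ * Wxy j a := by
    intro a
    rw [hJ 1 a]
    simp [hE, Finset.sum_ite_eq, eq_comm]
  have hJ2 : (∫ ω, Z 2 ω j * x₂ ω j ∂μ) = 1 := by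
    rw [hJ 2 j]
    simp [hE]
  -- mean of x₂ j is 0
  have hmean2 : (∫ ω, x₂ ω j ∂μ) = 0 := by
    simp_rw [hgrep]
    rw [tri (fun ω => ∑ k, σ * A j k * Z 0 ω k) (fun ω => ∑ k, σ * Wxy j k * Z 1 ω k)
      (fun ω => Z 2 ω j)
      (integrable_finset_sum _ fun k _ => (hZint 0 k).const_mul _)
      (integrable_finset_sum _ fun k _ => (hZint 1 k).const_mul _) (hZint 2 j),
      integral_finset_sum _ fun k _ => (hZint 0 k).const_mul _,
      integral_finset_sum _ fun k _ => (hZint 1 k).const_mul _]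
    simp_rw [integral_const_mul, hmean]
    simp
  -- mean of x₁ i is 0
  have hmean1 : (∫ ω, x₁ ω i ∂μ) = 0 := by
    simp_rw [hx₁, Pi.smul_apply, smul_eq_mul]
    rw [integral_const_mul, hmean, mul_zero]
  -- covariance
  have hcov : cov μ (fun ω => x₁ ω i) (fun ω => x₂ ω j) = σ ^ 2 * A j i := by
    rw [cov, hmean1, zero_mul, sub_zero]
    have : ∀ ω, x₁ ω i * x₂ ω j = σ * (Z 0 ω i * x₂ ω j) := by
      intro ω; rw [hx₁]; simp [smul_eq_mul, mul_assoc]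
    simp_rw [this]
    rw [integral_const_mul, hJ0 i]
    ring
  -- variance of x₁ i
  have hvar1 : var μ (fun ω => x₁ ω i) = σ ^ 2 := by
    rw [var, cov, hmean1, mul_zero, sub_zero]
    have : ∀ ω, x₁ ω i * x₁ ω i = (σ * σ) * (Z 0 ω i * Z 0 ω i) := by
      intro ω; rw [hx₁]; simp [smul_eq_mul]; ring
    simp_rw [this]
    rw [integral_const_mul, hunit 0 i i, if_pos rfl]
    ring
  -- variance of x₂ j
  have hvar2 : var μ (fun ω => x₂ ω j) =
      ((∑ k, (A j k) ^ 2) + ∑ k, (Wxy j k) ^ 2) * σ ^ 2 + 1 := by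
    rw [var, cov, hmean2, mul_zero, sub_zero]
    have hrep2 : ∀ ω, x₂ ω j * x₂ ω j =
        (∑ k, (σ * A j k) * (Z 0 ω k * x₂ ω j))
          + ((∑ k, (σ * Wxy j k) * (Z 1 ω k * x₂ ω j)) + Z 2 ω j * x₂ ω j) := by
      intro ω
      have h1 : x₂ ω j * x₂ ω j =
          (∑ k, σ * A j k * Z 0 ω k + (∑ k, σ * Wxy j k * Z 1 ω k + Z 2 ω j)) * x₂ ω j := by
        rw [← hgrep ω]
      rw [h1, add_mul, add_mul, Finset.sum_mul, Finset.sum_mul]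
      congr 1
      · exact Finset.sum_congr rfl fun k _ => by ring
      congr 1
      exact Finset.sum_congr rfl fun k _ => by ring
    simp_rw [hrep2]
    rw [tri (fun ω => ∑ k, (σ * A j k) * (Z 0 ω k * x₂ ω j))
      (fun ω => ∑ k, (σ * Wxy j k) * (Z 1 ω k * x₂ ω j)) (fun ω => Z 2 ω j * x₂ ω j)
      (integrable_finset_sum _ fun k _ => (hJint 0 k).const_mul _)
      (integrable_finset_sum _ fun k _ => (hJint 1 k).const_mul _) (hJint 2 j),
      integral_finset_sum _ fun k _ => (hJint 0 k).const_mul _,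
      integral_finset_sum _ fun k _ => (hJint 1 k).const_mul _]
    simp_rw [integral_const_mul, hJ0, hJ1, hJ2]
    simp_rw [show ∀ x : Fin d, σ * A j x * (σ * A j x) = A j x ^ 2 * σ ^ 2 from fun x => by ring,
      show ∀ x : Fin d, σ * Wxy j x * (σ * Wxy j x) = Wxy j x ^ 2 * σ ^ 2 from fun x => by ring,
      ← Finset.sum_mul]
    ring
  -- final computation
  rw [corr, hcov, hvar1, hvar2, Matrix.transpose_apply]
  have hc : (0:ℝ) ≤ ((∑ k, (A j k) ^ 2) + ∑ k, (Wxy j k) ^ 2) * σ ^ 2 + 1 := by positivity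
  rw [Real.sqrt_mul (sq_nonneg σ), Real.sqrt_sq hσ.le]
  rw [pow_two, mul_assoc, mul_div_mul_left _ _ hσ.ne']
end

section
/- (Proposition 1) In the IRM-example generating model, fix indices (i,j) with Γ_{ij} ≠ 0, where Γ = (W_{xy} W_{yx})ᵀ. For any two parameter values 0 < σ < σ', the absolute value of the Pearson correlation between the i-th coordinate of x₁(σ) and the j-th coordinate of x₂(σ) is strictly less than the absolute value of the Pearson correlation between the i-th coordinate of x₁(σ') and the j-th coordinate of x₂(σ'). In other words, |Corr((x₁)_i, (x₂)_j)| is strictly increasing in σ on (0, ∞). -/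
open MeasureTheory ProbabilityTheory Matrix

private lemma sqrt_aux_mono (c : ℝ) (hc : 0 ≤ c) {s t : ℝ} (hs : 0 < s) (hst : s < t) :
    s ^ 2 / Real.sqrt (s ^ 2 * (s ^ 2 * c + 1)) <
      t ^ 2 / Real.sqrt (t ^ 2 * (t ^ 2 * c + 1)) := by
  have ht : 0 < t := hs.trans hst
  have h1 : 0 < s ^ 2 * (s ^ 2 * c + 1) := by positivity
  have h2 : 0 < t ^ 2 * (t ^ 2 * c + 1) := by positivity
  rw [div_lt_div_iff₀ (Real.sqrt_pos.mpr h1) (Real.sqrt_pos.mpr h2)]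
  have e1 : s ^ 2 * Real.sqrt (t ^ 2 * (t ^ 2 * c + 1))
      = Real.sqrt ((s ^ 2) ^ 2 * (t ^ 2 * (t ^ 2 * c + 1))) := by
    have h := Real.sqrt_mul (sq_nonneg (s ^ 2)) (t ^ 2 * (t ^ 2 * c + 1))
    rw [h, Real.sqrt_sq (sq_nonneg s)]
  have e2 : t ^ 2 * Real.sqrt (s ^ 2 * (s ^ 2 * c + 1))
      = Real.sqrt ((t ^ 2) ^ 2 * (s ^ 2 * (s ^ 2 * c + 1))) := by
    have h := Real.sqrt_mul (sq_nonneg (t ^ 2)) (s ^ 2 * (s ^ 2 * c + 1))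
    rw [h, Real.sqrt_sq (sq_nonneg t)]
  rw [e1, e2]
  apply Real.sqrt_lt_sqrt (by positivity)
  have hs2 : s ^ 2 < t ^ 2 := by nlinarith
  nlinarith [mul_pos (sub_pos.mpr hs2) (mul_pos (mul_pos hs hs) (mul_pos ht ht)),
    mul_nonneg (mul_nonneg (sq_nonneg s) (sq_nonneg t)) hc]

/-- (Proposition 1) In the IRM-example generating model, if `Γ_{ij} ≠ 0` where
`Γ = (W_xy · W_yx)ᵀ`, then `|Corr((x₁(σ))_i, (x₂(σ))_j)|` is strictly increasing in `σ`
on `(0, ∞)`. -/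
theorem abs_correlation_strictMono {Ω : Type*} [MeasurableSpace Ω] (μ : Measure Ω)
    [IsProbabilityMeasure μ] {d : ℕ}
    (Z : Fin 3 → Ω → (Fin d → ℝ))
    (hmeas : ∀ k, Measurable (Z k))
    (hindep : iIndepFun Z μ)
    (hL2 : ∀ k i, MemLp (fun ω => Z k ω i) 2 μ)
    (hmean : ∀ k i, (∫ ω, Z k ω i ∂μ) = 0)
    (hunit : ∀ k i j, (∫ ω, Z k ω i * Z k ω j ∂μ) = if i = j then 1 else 0)
    (Wyx Wxy : Matrix (Fin d) (Fin d) ℝ)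
    (x₁ ytilde x₂ : ℝ → Ω → Fin d → ℝ)
    (hx₁ : ∀ σ ω, x₁ σ ω = σ • Z 0 ω)
    (hy : ∀ σ ω, ytilde σ ω = Wyx.mulVec (x₁ σ ω) + σ • Z 1 ω)
    (hx₂ : ∀ σ ω, x₂ σ ω = Wxy.mulVec (ytilde σ ω) + Z 2 ω)
    (i j : Fin d) (hΓ : ((Wxy * Wyx)ᵀ) i j ≠ 0)
    (σ σ' : ℝ) (hσ : 0 < σ) (hσσ' : σ < σ') :
    |corr μ (fun ω => x₁ σ ω i) (fun ω => x₂ σ ω j)| <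
      |corr μ (fun ω => x₁ σ' ω i) (fun ω => x₂ σ' ω j)| := by
  classical
  -- integrability of products
  have hInt2 : ∀ (k k' : Fin 3) (m m' : Fin d),
      Integrable (fun ω => Z k ω m * Z k' ω m') μ := by
    intro k k' m m'
    have h12 : (1 : ENNReal) / 1 = 1 / 2 + 1 / 2 := by
      rw [ENNReal.add_halves, one_div_one]
    have h := (hL2 k' m').smul (r := 1) (hL2 k m)
    have h' : MemLp (fun ω => Z k ω m * Z k' ω m') 1 μ := by
      exact h
    exact memLp_one_iff_integrable.mp h'
  -- second moments
  have hmom : ∀ (k k' : Fin 3) (m m' : Fin d),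
      (∫ ω, Z k ω m * Z k' ω m' ∂μ) = if k = k' ∧ m = m' then 1 else 0 := by
    intro k k' m m'
    by_cases hk : k = k'
    · subst hk
      rw [hunit]
      by_cases hm : m = m' <;> simp [hm]
    · have hind : IndepFun (fun ω => Z k ω m) (fun ω => Z k' ω m') μ :=
        (hindep.indepFun hk).comp (measurable_pi_apply m) (measurable_pi_apply m')
      have h := hind.integral_mul_eq_mul_integral
        ((hL2 k m).integrable one_le_two).aestronglyMeasurable ((hL2 k' m').integrable one_le_two).aestronglyMeasurable
      rw [show ((fun ω => Z k ω m) * fun ω => Z k' ω m') = fun ω => Z k ω m * Z k' ω m'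
        from rfl] at h
      rw [if_neg (by tauto)]
      rw [h, hmean, hmean, mul_zero]
  -- sums of the form ∑ p, a p * Z p.1 ω p.2
  have hterm_int : ∀ (a : Fin 3 × Fin d → ℝ) (p : Fin 3 × Fin d),
      Integrable (fun ω => a p * Z p.1 ω p.2) μ :=
    fun a p => ((hL2 p.1 p.2).integrable one_le_two).const_mul (a p)
  have hsum_mean : ∀ a : Fin 3 × Fin d → ℝ,
      (∫ ω, ∑ p : Fin 3 × Fin d, a p * Z p.1 ω p.2 ∂μ) = 0 := by
    intro a
    rw [integral_finset_sum _ (fun p _ => hterm_int a p)]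
    simp [integral_const_mul, hmean]
  have hsum_mul : ∀ a b : Fin 3 × Fin d → ℝ,
      (∫ ω, (∑ p : Fin 3 × Fin d, a p * Z p.1 ω p.2) *
          (∑ q : Fin 3 × Fin d, b q * Z q.1 ω q.2) ∂μ)
        = ∑ p : Fin 3 × Fin d, a p * b p := by
    intro a b
    have expand : (fun ω => (∑ p : Fin 3 × Fin d, a p * Z p.1 ω p.2) *
        (∑ q : Fin 3 × Fin d, b q * Z q.1 ω q.2))
        = fun ω => ∑ p : Fin 3 × Fin d, ∑ q : Fin 3 × Fin d,
            (a p * b q) * (Z p.1 ω p.2 * Z q.1 ω q.2) := by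
      funext ω
      rw [Finset.sum_mul_sum]
      exact Finset.sum_congr rfl fun p _ => Finset.sum_congr rfl fun q _ => by ring
    rw [show (∫ ω, (∑ p : Fin 3 × Fin d, a p * Z p.1 ω p.2) *
          (∑ q : Fin 3 × Fin d, b q * Z q.1 ω q.2) ∂μ)
        = ∫ ω, ∑ p : Fin 3 × Fin d, ∑ q : Fin 3 × Fin d,
            (a p * b q) * (Z p.1 ω p.2 * Z q.1 ω q.2) ∂μ from congrArg _ expand]
    rw [integral_finset_sum _ (fun p _ => integrable_finset_sum _
      (fun q _ => (hInt2 p.1 q.1 p.2 q.2).const_mul _))]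
    have hinner : ∀ p : Fin 3 × Fin d,
        (∫ ω, ∑ q : Fin 3 × Fin d, (a p * b q) * (Z p.1 ω p.2 * Z q.1 ω q.2) ∂μ)
          = a p * b p := by
      intro p
      rw [integral_finset_sum _ (fun q _ => (hInt2 p.1 q.1 p.2 q.2).const_mul _)]
      have hq : ∀ q : Fin 3 × Fin d,
          (∫ ω, (a p * b q) * (Z p.1 ω p.2 * Z q.1 ω q.2) ∂μ)
            = if q = p then a p * b p else 0 := by
        intro q
        rw [integral_const_mul, hmom]
        by_cases h : q = p
        · subst h; simp
        · have h' : ¬(p.1 = q.1 ∧ p.2 = q.2) := by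
            intro hpq
            exact h (Prod.ext hpq.1.symm hpq.2.symm)
          simp [h, h']
      simp_rw [hq]
      simp
    simp_rw [hinner]
  have hcov : ∀ a b : Fin 3 × Fin d → ℝ,
      cov μ (fun ω => ∑ p : Fin 3 × Fin d, a p * Z p.1 ω p.2)
        (fun ω => ∑ p : Fin 3 × Fin d, b p * Z p.1 ω p.2)
        = ∑ p : Fin 3 × Fin d, a p * b p := by
    intro a b
    simp only [cov]
    rw [hsum_mul, hsum_mean, hsum_mean, mul_zero, sub_zero]
  -- coefficient representations
  set A := Wxy * Wyx with hA
  set a : ℝ → Fin 3 × Fin d → ℝ :=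
    fun s p => if p.1 = 0 then (if p.2 = i then s else 0) else 0 with ha
  set b : ℝ → Fin 3 × Fin d → ℝ :=
    fun s p => if p.1 = 0 then s * A j p.2
      else if p.1 = 1 then s * Wxy j p.2
      else (if p.2 = j then 1 else 0) with hb
  have hx1rep : ∀ s : ℝ, (fun ω => x₁ s ω i)
      = fun ω => ∑ p : Fin 3 × Fin d, a s p * Z p.1 ω p.2 := by
    intro s
    funext ω
    rw [hx₁]
    rw [Fintype.sum_prod_type, Fin.sum_univ_three]
    simp [ha, ite_mul, Finset.sum_ite_eq']
  have hx2rep : ∀ s : ℝ, (fun ω => x₂ s ω j)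
      = fun ω => ∑ p : Fin 3 × Fin d, b s p * Z p.1 ω p.2 := by
    intro s
    funext ω
    rw [hx₂, hy, hx₁]
    have hv : Wxy.mulVec (Wyx.mulVec (s • Z 0 ω) + s • Z 1 ω) + Z 2 ω
        = s • (A.mulVec (Z 0 ω)) + s • (Wxy.mulVec (Z 1 ω)) + Z 2 ω := by
      simp only [Matrix.mulVec_add, Matrix.mulVec_smul, Matrix.mulVec_mulVec, ← hA]
    rw [hv]
    rw [Fintype.sum_prod_type, Fin.sum_univ_three]
    simp [hb, Matrix.mulVec, dotProduct, Finset.mul_sum, mul_assoc,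
      ite_mul, Finset.sum_ite_eq']
  set c := (∑ m, A j m ^ 2) + (∑ m, Wxy j m ^ 2) with hcdef
  have hcov_val : ∀ s : ℝ, (∑ p : Fin 3 × Fin d, a s p * b s p) = s ^ 2 * A j i := by
    intro s
    rw [Fintype.sum_prod_type, Fin.sum_univ_three]
    simp [ha, hb, ite_mul, Finset.sum_ite_eq']
    ring
  have hvar1 : ∀ s : ℝ, (∑ p : Fin 3 × Fin d, a s p * a s p) = s ^ 2 := by
    intro s
    rw [Fintype.sum_prod_type, Fin.sum_univ_three]
    simp [ha, ite_mul, mul_ite, Finset.sum_ite_eq']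
    ring
  have hvar2 : ∀ s : ℝ, (∑ p : Fin 3 × Fin d, b s p * b s p) = s ^ 2 * c + 1 := by
    intro s
    have hsplit : (∑ p : Fin 3 × Fin d, b s p * b s p)
        = ((∑ m : Fin d, (s * A j m) * (s * A j m))
          + (∑ m : Fin d, (s * Wxy j m) * (s * Wxy j m)))
          + (∑ m : Fin d, (if m = j then (1:ℝ) else 0) * (if m = j then 1 else 0)) := by
      rw [Fintype.sum_prod_type, Fin.sum_univ_three]
      simp [hb]
    rw [hsplit]
    have h1 : (∑ m : Fin d, (s * A j m) * (s * A j m)) = s ^ 2 * ∑ m, A j m ^ 2 := by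
      rw [Finset.mul_sum]
      exact Finset.sum_congr rfl fun m _ => by ring
    have h2 : (∑ m : Fin d, (s * Wxy j m) * (s * Wxy j m)) = s ^ 2 * ∑ m, Wxy j m ^ 2 := by
      rw [Finset.mul_sum]
      exact Finset.sum_congr rfl fun m _ => by ring
    have h3 : (∑ m : Fin d, (if m = j then (1:ℝ) else 0) * (if m = j then 1 else 0)) = 1 := by
      simp [ite_mul, Finset.sum_ite_eq']
    rw [h1, h2, h3, hcdef]
    ring
  have hcorr : ∀ s : ℝ, corr μ (fun ω => x₁ s ω i) (fun ω => x₂ s ω j)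
      = (s ^ 2 * A j i) / Real.sqrt (s ^ 2 * (s ^ 2 * c + 1)) := by
    intro s
    simp only [corr, var]
    rw [hx1rep, hx2rep, hcov, hcov, hcov, hcov_val, hvar1, hvar2]
  have hAji : A j i ≠ 0 := by
    simpa [Matrix.transpose_apply, hA] using hΓ
  have hc0 : 0 ≤ c := by positivity
  have habs : ∀ s : ℝ,
      |(s ^ 2 * A j i) / Real.sqrt (s ^ 2 * (s ^ 2 * c + 1))|
        = (s ^ 2 / Real.sqrt (s ^ 2 * (s ^ 2 * c + 1))) * |A j i| := by
    intro s
    rw [abs_div, abs_of_nonneg (Real.sqrt_nonneg _), abs_mul, abs_of_nonneg (sq_nonneg s)]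
    ring
  rw [hcorr σ, hcorr σ', habs σ, habs σ']
  exact mul_lt_mul_of_pos_right (sqrt_aux_mono c hc0 hσ hσσ') (abs_pos.mpr hAji)
end
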